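/- Let C and σσ' be symmetric positive definite N×N real matrices, γ > 0, and set D = (γ C^{-1/2} σσ' C^{-1/2})^{1/2} (the positive definite square root). Then a(t) = C^{1/2} D tanh(D(t - T)) C^{1/2} solves the matrix Riccati ODE ∂_t a - γ σσ' + a C^{-1} a = 0 on [0, T] with terminal condition a(T) = 0, and a(t) is symmetric and negative definite for t < T. -/

import Mathlib

open Matrix

/-- Hyperbolic tangent of a matrix, via the matrix exponential
(for symmetric matrices this agrees with the functional calculus). -/
noncomputable def mtanh {n : ℕ} (M : Matrix (Fin n) (Fin n) ℝ) : Matrix (Fin n) (Fin n) ℝ :=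
  (NormedSpace.exp M - NormedSpace.exp (-M)) * (NormedSpace.exp M + NormedSpace.exp (-M))⁻¹

section Aux

variable {N : ℕ}

/-- conjugation of a diagonal matrix by `P`. -/
noncomputable def uconj (P : Matrix (Fin N) (Fin N) ℝ) (v : Fin N → ℝ) :
    Matrix (Fin N) (Fin N) ℝ :=
  P * Matrix.diagonal v * star P

variable {P : Matrix (Fin N) (Fin N) ℝ}

lemma uconj_mul (hP : star P * P = 1) (v w : Fin N → ℝ) :
    uconj P v * uconj P w = uconj P (fun i => v i * w i) := by
  unfold uconj
  calc P * Matrix.diagonal v * star P * (P * Matrix.diagonal w * star P)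
      = P * (Matrix.diagonal v * ((star P * P) * (Matrix.diagonal w * star P))) := by
        simp only [Matrix.mul_assoc]
    _ = P * (Matrix.diagonal v * (Matrix.diagonal w * star P)) := by
        rw [hP, Matrix.one_mul]
    _ = P * ((Matrix.diagonal v * Matrix.diagonal w) * star P) := by
        rw [Matrix.mul_assoc]
    _ = P * Matrix.diagonal (fun i => v i * w i) * star P := by
        rw [Matrix.diagonal_mul_diagonal, Matrix.mul_assoc]

lemma uconj_neg (v : Fin N → ℝ) : -(uconj P v) = uconj P (fun i => -(v i)) := by
  unfold uconj
  have h : Matrix.diagonal (fun i => -(v i)) = -Matrix.diagonal v := by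
    rw [← Matrix.diagonal_neg]
  rw [h, Matrix.mul_neg, Matrix.neg_mul]

lemma uconj_sub (v w : Fin N → ℝ) :
    uconj P v - uconj P w = uconj P (fun i => v i - w i) := by
  unfold uconj
  rw [← Matrix.sub_mul, ← Matrix.mul_sub, Matrix.diagonal_sub]

lemma uconj_add (v w : Fin N → ℝ) :
    uconj P v + uconj P w = uconj P (fun i => v i + w i) := by
  unfold uconj
  rw [← Matrix.add_mul, ← Matrix.mul_add, Matrix.diagonal_add]

lemma uconj_smul (s : ℝ) (v : Fin N → ℝ) :
    s • uconj P v = uconj P (fun i => s * v i) := by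
  unfold uconj
  have h : (Matrix.diagonal fun i => s * v i) = s • Matrix.diagonal v := by
    rw [← Matrix.diagonal_smul]
    rfl
  rw [h, Matrix.mul_smul, Matrix.smul_mul]

lemma uconj_one (hP' : P * star P = 1) : uconj P (fun _ => 1) = 1 := by
  unfold uconj
  have h1 : Matrix.diagonal (fun _ : Fin N => (1:ℝ)) = 1 := Matrix.diagonal_one
  rw [h1, Matrix.mul_one, hP']

lemma uconj_zero : uconj P (fun _ => 0) = 0 := by
  unfold uconj
  have h1 : Matrix.diagonal (fun _ : Fin N => (0:ℝ)) = 0 := Matrix.diagonal_zero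
  rw [h1, Matrix.mul_zero, Matrix.zero_mul]

lemma uconj_exp (hP : star P * P = 1) (hP' : P * star P = 1) (v : Fin N → ℝ) :
    NormedSpace.exp (uconj P v) = uconj P (fun i => Real.exp (v i)) := by
  have hPunit : IsUnit P := ⟨⟨P, star P, hP', hP⟩, rfl⟩
  have hPinv : P⁻¹ = star P := Matrix.inv_eq_right_inv hP'
  unfold uconj
  rw [← hPinv, Matrix.exp_conj P (Matrix.diagonal v) hPunit, Matrix.exp_diagonal]
  have h : (NormedSpace.exp v : Fin N → ℝ) = fun i => Real.exp (v i) := by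
    rw [Pi.exp_def]
    funext i
    exact (congrFun Real.exp_eq_exp_ℝ (v i)).symm
  rw [h]

lemma uconj_inv (hP : star P * P = 1) (hP' : P * star P = 1) (v : Fin N → ℝ)
    (hv : ∀ i, v i ≠ 0) : (uconj P v)⁻¹ = uconj P (fun i => (v i)⁻¹) := by
  apply Matrix.inv_eq_right_inv
  rw [uconj_mul hP]
  have h : (fun i => v i * (v i)⁻¹) = fun _ : Fin N => (1:ℝ) := by
    funext i; exact mul_inv_cancel₀ (hv i)
  rw [h, uconj_one hP']

lemma real_tanh_formula (x : ℝ) :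
    Real.tanh x = (Real.exp x - Real.exp (-x)) * (Real.exp x + Real.exp (-x))⁻¹ := by
  have h : Real.exp x + Real.exp (-x) ≠ 0 := by positivity
  rw [Real.tanh_eq_sinh_div_cosh, Real.sinh_eq, Real.cosh_eq]
  field_simp

lemma mtanh_uconj (hP : star P * P = 1) (hP' : P * star P = 1) (v : Fin N → ℝ) :
    mtanh (uconj P v) = uconj P (fun i => Real.tanh (v i)) := by
  unfold mtanh
  rw [uconj_neg, uconj_exp hP hP', uconj_exp hP hP', uconj_sub, uconj_add,
    uconj_inv hP hP' _ (fun i => by positivity), uconj_mul hP]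
  have h : (fun i => (Real.exp (v i) - Real.exp (-(v i))) * (Real.exp (v i) + Real.exp (-(v i)))⁻¹)
      = fun i => Real.tanh (v i) := by
    funext i
    exact (real_tanh_formula (v i)).symm
  rw [h]

lemma hasDerivAt_tanh (x : ℝ) :
    HasDerivAt Real.tanh (1 - Real.tanh x ^ 2) x := by
  have h := (Real.hasDerivAt_sinh x).div (Real.hasDerivAt_cosh x) (Real.cosh_pos x).ne'
  have hfun : (Real.sinh / Real.cosh) = Real.tanh := by
    funext y; rw [Pi.div_apply]; exact (Real.tanh_eq_sinh_div_cosh y).symm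
  rw [hfun] at h
  refine h.congr_deriv ?_
  have hc := (Real.cosh_pos x).ne'
  rw [Real.tanh_eq_sinh_div_cosh]
  field_simp

lemma mul_diag_mul_apply (A B : Matrix (Fin N) (Fin N) ℝ) (v : Fin N → ℝ) (i j : Fin N) :
    (A * Matrix.diagonal v * B) i j = ∑ k, A i k * v k * B k j := by
  rw [Matrix.mul_apply]
  simp only [Matrix.mul_diagonal]

lemma mul_uconj_assoc (Ch : Matrix (Fin N) (Fin N) ℝ) (v : Fin N → ℝ) :
    Ch * uconj P v * Ch = (Ch * P) * Matrix.diagonal v * (star P * Ch) := by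
  unfold uconj
  simp only [Matrix.mul_assoc]

lemma posDef_conj_of_isUnit {M B : Matrix (Fin N) (Fin N) ℝ} (hM : M.PosDef)
    (hB : IsUnit B) : (Bᴴ * M * B).PosDef := by
  refine Matrix.PosDef.of_dotProduct_mulVec_pos (Matrix.isHermitian_conjTranspose_mul_mul B hM.1) fun x hx => ?_
  have hinj : Function.Injective (B.mulVec) := Matrix.mulVec_injective_iff_isUnit.mpr hB
  have hx' : B *ᵥ x ≠ 0 := by
    intro h
    exact hx (hinj (by simpa using h))
  simpa only [star_mulVec, dotProduct_mulVec, vecMul_vecMul] using hM.dotProduct_mulVec_pos hx'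

end Aux

theorem stmt_6 (N : ℕ) (T : ℝ) (hT : 0 < T) (γ : ℝ) (hγ : 0 < γ)
    (C S : Matrix (Fin N) (Fin N) ℝ) (hC : C.PosDef) (hCsymm : C.IsSymm)
    (hS : S.PosDef) (hSsymm : S.IsSymm)
    (Ch : Matrix (Fin N) (Fin N) ℝ) (hCh : Ch.PosDef) (hChsq : Ch * Ch = C)
    (D : Matrix (Fin N) (Fin N) ℝ) (hD : D.PosDef)
    (hDsq : D * D = γ • (Ch⁻¹ * S * Ch⁻¹))
    (a : ℝ → Matrix (Fin N) (Fin N) ℝ)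
    (ha : ∀ t, a t = Ch * (D * mtanh ((t - T) • D)) * Ch) :
    (∀ t ∈ Set.Icc (0 : ℝ) T, ∀ i j,
        HasDerivAt (fun τ => a τ i j) ((γ • S - a t * C⁻¹ * a t) i j) t) ∧
      a T = 0 ∧ (∀ t, (a t).IsSymm) ∧ ∀ t < T, (-(a t)).PosDef := by
  classical
  set P : Matrix (Fin N) (Fin N) ℝ := (hD.1.eigenvectorUnitary : Matrix (Fin N) (Fin N) ℝ)
    with hPdef
  set d : Fin N → ℝ := hD.1.eigenvalues with hddef
  have hdpos : ∀ i, 0 < d i := fun i => hD.eigenvalues_pos i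
  have hP : star P * P = 1 := Unitary.coe_star_mul_self hD.1.eigenvectorUnitary
  have hP' : P * star P = 1 := Unitary.coe_mul_star_self hD.1.eigenvectorUnitary
  have spec : D = uconj P d := by
    have h := hD.1.spectral_theorem
    have h2 : (RCLike.ofReal ∘ hD.1.eigenvalues : Fin N → ℝ) = d := rfl
    unfold uconj
    rw [h2] at h
    exact h
  have hsD : ∀ s : ℝ, s • D = uconj P (fun i => s * d i) := by
    intro s
    rw [spec, uconj_smul]
  have hmt : ∀ s : ℝ, mtanh (s • D) = uconj P (fun i => Real.tanh (s * d i)) := by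
    intro s
    rw [hsD, mtanh_uconj hP hP']
  have haQ : ∀ t, a t = Ch * uconj P (fun i => d i * Real.tanh ((t - T) * d i)) * Ch := by
    intro t
    rw [ha, hmt, spec, uconj_mul hP]
  have hChdet : IsUnit Ch.det := Matrix.isUnit_iff_isUnit_det Ch |>.mp hCh.isUnit
  -- terminal condition
  have hterm : a T = 0 := by
    rw [haQ]
    have h : (fun i => d i * Real.tanh ((T - T) * d i)) = fun _ : Fin N => (0:ℝ) := by
      funext i; simp [Real.tanh_zero]
    rw [h, uconj_zero, Matrix.mul_zero, Matrix.zero_mul]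
  -- hermitian
  have hherm : ∀ t, (a t).IsHermitian := by
    intro t
    rw [haQ]
    have h1 : (uconj P (fun i => d i * Real.tanh ((t - T) * d i))).IsHermitian := by
      unfold uconj
      rw [Matrix.star_eq_conjTranspose]
      exact Matrix.isHermitian_mul_mul_conjTranspose P (Matrix.isHermitian_diagonal _)
    have h2 := Matrix.isHermitian_conjTranspose_mul_mul Ch h1
    rwa [hCh.1.eq] at h2
  have hsymm : ∀ t, (a t).IsSymm := by
    intro t
    have h := hherm t
    unfold Matrix.IsSymm
    ext i j
    have h2 := congrFun (congrFun h.eq i) j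
    simpa [Matrix.conjTranspose_apply, Matrix.transpose_apply] using h2
  -- negative definiteness
  have hneg : ∀ t < T, (-(a t)).PosDef := by
    intro t ht
    rw [haQ]
    have hn1 : -(Ch * uconj P (fun i => d i * Real.tanh ((t - T) * d i)) * Ch)
        = Ch * (-(uconj P (fun i => d i * Real.tanh ((t - T) * d i)))) * Ch := by
      rw [Matrix.mul_neg, Matrix.neg_mul]
    have h2 : (fun i => -(d i * Real.tanh ((t - T) * d i)))
        = fun i => d i * Real.tanh ((T - t) * d i) := by
      funext i
      have h3 : (t - T) * d i = -((T - t) * d i) := by ring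
      rw [h3, Real.tanh_neg]; ring
    rw [hn1, uconj_neg]
    beta_reduce
    rw [h2]
    have key : Ch * uconj P (fun i => d i * Real.tanh ((T - t) * d i)) * Ch
        = (star P * Ch)ᴴ * Matrix.diagonal (fun i => d i * Real.tanh ((T - t) * d i))
          * (star P * Ch) := by
      rw [mul_uconj_assoc, Matrix.conjTranspose_mul, Matrix.star_eq_conjTranspose,
        Matrix.conjTranspose_conjTranspose, hCh.1.eq]
    rw [key]
    apply posDef_conj_of_isUnit
    · rw [Matrix.posDef_diagonal_iff]
      intro i
      have h1 : 0 < (T - t) * d i := mul_pos (by linarith) (hdpos i)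
      have h4 : 0 < Real.tanh ((T - t) * d i) := by
        rw [Real.tanh_eq_sinh_div_cosh]
        exact div_pos (Real.sinh_pos_iff.mpr h1) (Real.cosh_pos _)
      exact mul_pos (hdpos i) h4
    · exact IsUnit.mul ⟨⟨star P, P, hP, hP'⟩, rfl⟩ hCh.isUnit
  refine ⟨?_, hterm, hsymm, hneg⟩
  -- derivative
  intro t ht i j
  have hc1 : Ch * Ch⁻¹ = 1 := Matrix.mul_nonsing_inv Ch hChdet
  have hc2 : Ch⁻¹ * Ch = 1 := Matrix.nonsing_inv_mul Ch hChdet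
  have hγS : γ • S = Ch * uconj P (fun k => d k ^ 2) * Ch := by
    have h1 : Ch * (D * D) * Ch = γ • S := by
      rw [hDsq, Matrix.mul_smul, Matrix.smul_mul]
      congr 1
      calc Ch * (Ch⁻¹ * S * Ch⁻¹) * Ch
          = Ch * Ch⁻¹ * (S * (Ch⁻¹ * Ch)) := by simp only [Matrix.mul_assoc]
        _ = S := by rw [hc1, hc2, Matrix.one_mul, Matrix.mul_one]
    rw [← h1, spec, uconj_mul hP]
    have h2 : (fun i => d i * d i) = fun k => d k ^ 2 := by funext k; ring
    rw [h2]
  have hCinv : C⁻¹ = Ch⁻¹ * Ch⁻¹ := by rw [← hChsq, Matrix.mul_inv_rev]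
  have hACA : a t * C⁻¹ * a t
      = Ch * uconj P (fun k => (d k * Real.tanh ((t - T) * d k)) ^ 2) * Ch := by
    rw [haQ, hCinv]
    set v := fun k => d k * Real.tanh ((t - T) * d k) with hv
    calc Ch * uconj P v * Ch * (Ch⁻¹ * Ch⁻¹) * (Ch * uconj P v * Ch)
        = Ch * (uconj P v * ((Ch * Ch⁻¹) * ((Ch⁻¹ * Ch) * (uconj P v * Ch)))) := by
          simp only [Matrix.mul_assoc]
      _ = Ch * (uconj P v * (uconj P v * Ch)) := by
          rw [hc1, hc2, Matrix.one_mul, Matrix.one_mul]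
      _ = Ch * (uconj P v * uconj P v) * Ch := by simp only [Matrix.mul_assoc]
      _ = Ch * uconj P (fun k => v k ^ 2) * Ch := by
          rw [uconj_mul hP]
          have h2 : (fun k => v k * v k) = fun k => v k ^ 2 := by funext k; ring
          rw [h2]
  have hrhs : γ • S - a t * C⁻¹ * a t
      = Ch * uconj P (fun k => d k ^ 2 * (1 - Real.tanh ((t - T) * d k) ^ 2)) * Ch := by
    rw [hγS, hACA, ← Matrix.sub_mul, ← Matrix.mul_sub, uconj_sub]
    have h2 : (fun k => d k ^ 2 - (d k * Real.tanh ((t - T) * d k)) ^ 2)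
        = fun k => d k ^ 2 * (1 - Real.tanh ((t - T) * d k) ^ 2) := by
      funext k; ring
    rw [h2]
  have hentry : ∀ τ, a τ i j
      = ∑ k, (Ch * P) i k * (d k * Real.tanh ((τ - T) * d k)) * ((star P * Ch) k j) := by
    intro τ
    rw [haQ, mul_uconj_assoc, mul_diag_mul_apply]
  have hrhsentry : (γ • S - a t * C⁻¹ * a t) i j
      = ∑ k, (Ch * P) i k * (d k ^ 2 * (1 - Real.tanh ((t - T) * d k) ^ 2))
          * ((star P * Ch) k j) := by
    rw [hrhs, mul_uconj_assoc, mul_diag_mul_apply]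
  rw [hrhsentry]
  simp only [hentry]
  apply HasDerivAt.fun_sum
  intro k _
  have hin : HasDerivAt (fun τ : ℝ => (τ - T) * d k) (d k) t := by
    simpa using ((hasDerivAt_id t).sub_const T).mul_const (d k)
  have h1 : HasDerivAt (fun τ => Real.tanh ((τ - T) * d k))
      ((1 - Real.tanh ((t - T) * d k) ^ 2) * d k) t :=
    by have := (hasDerivAt_tanh ((t - T) * d k)).comp t hin; exact this
  have h2 := ((h1.const_mul (d k)).const_mul ((Ch * P) i k)).mul_const ((star P * Ch) k j)
  refine h2.congr_deriv ?_
  ring
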